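/- Suppose Φ is moreover convex. Let S ⊆ S_Φ be nonempty and contained in {x : ⟨x,u⟩ ≥ α} for some unit vector u and α > 0. Then the closure of sco S := ρ(conv S) equals the intersection of all closed s-convex subsets of S_Φ containing S; in particular cl(sco S) is the smallest closed s-convex set containing S. -/
import Mathlib


open Set
open scoped RealInnerProductSpace

/-- `rho Φ x = x / Φ x` (equal to `0` when `Φ x = 0`, in particular `rho Φ 0 = 0`). -/
noncomputable def rho {n : ℕ} (Φ : EuclideanSpace ℝ (Fin n) → ℝ)
    (x : EuclideanSpace ℝ (Fin n)) : EuclideanSpace ℝ (Fin n) := (Φ x)⁻¹ • x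

/-- The `Φ`-sphere `S_Φ = {x | Φ x = 1}`. -/
def sphereSet {n : ℕ} (Φ : EuclideanSpace ℝ (Fin n) → ℝ) : Set (EuclideanSpace ℝ (Fin n)) :=
  {x | Φ x = 1}

/-- `S` is s-convex: `ρ(λx + (1-λ)y) ∈ S` for all `x, y ∈ S`, `λ ∈ [0,1]`. -/
def SConvex {n : ℕ} (Φ : EuclideanSpace ℝ (Fin n) → ℝ)
    (S : Set (EuclideanSpace ℝ (Fin n))) : Prop :=
  ∀ x ∈ S, ∀ y ∈ S, ∀ l : ℝ, l ∈ Set.Icc (0 : ℝ) 1 → rho Φ (l • x + (1 - l) • y) ∈ S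

lemma rho_smul {n : ℕ} {Φ : EuclideanSpace ℝ (Fin n) → ℝ}
    (hhom : ∀ (t : ℝ), 0 ≤ t → ∀ x, Φ (t • x) = t * Φ x)
    {t : ℝ} (ht : 0 < t) (x : EuclideanSpace ℝ (Fin n)) :
    rho Φ (t • x) = rho Φ x := by
  unfold rho
  rw [hhom t ht.le, smul_smul]
  congr 1
  rw [mul_inv, mul_comm, ← mul_assoc, mul_inv_cancel₀ ht.ne', one_mul]

lemma rho_combo {n : ℕ} {Φ : EuclideanSpace ℝ (Fin n) → ℝ}
    (hhom : ∀ (t : ℝ), 0 ≤ t → ∀ x, Φ (t • x) = t * Φ x)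
    {a b : EuclideanSpace ℝ (Fin n)} {p q l : ℝ}
    (hp : 0 < p) (hq : 0 < q) (hl : l ∈ Set.Icc (0:ℝ) 1) :
    ∃ m ∈ Set.Icc (0:ℝ) 1,
      rho Φ (l • (p • a) + (1 - l) • (q • b)) = rho Φ (m • a + (1 - m) • b) := by
  obtain ⟨hl0, hl1⟩ := hl
  set s := l * p + (1 - l) * q with hs
  have hs0 : 0 < s := by
    rcases eq_or_lt_of_le hl0 with h | h
    · simp only [hs, ← h, zero_mul, sub_zero, one_mul, zero_add]; exact hq
    · nlinarith [mul_nonneg (sub_nonneg.2 hl1) hq.le, mul_pos h hp]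
  have h1 : s * (l * p / s) = l * p := by field_simp
  have h2 : s * (1 - l * p / s) = (1 - l) * q := by
    rw [mul_sub, h1, mul_one, hs]; ring
  refine ⟨l * p / s, ⟨by positivity, ?_⟩, ?_⟩
  · rw [div_le_one hs0]; nlinarith [mul_nonneg (sub_nonneg.2 hl1) hq.le]
  · have key : l • (p • a) + (1 - l) • (q • b)
        = s • ((l * p / s) • a + (1 - l * p / s) • b) := by
      simp only [smul_add, smul_smul, h1, h2]
    rw [key, rho_smul hhom hs0]

theorem stmt16 {n : ℕ} (hn : 2 ≤ n) (Φ : EuclideanSpace ℝ (Fin n) → ℝ)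
    (hc : Continuous Φ) (hnn : ∀ x, 0 ≤ Φ x)
    (hhom : ∀ (t : ℝ), 0 ≤ t → ∀ x, Φ (t • x) = t * Φ x)
    (hzero : ∀ x, Φ x = 0 ↔ x = 0)
    (hconv : ConvexOn ℝ Set.univ Φ)
    (S : Set (EuclideanSpace ℝ (Fin n))) (hne : S.Nonempty) (hsub : S ⊆ sphereSet Φ)
    (u : EuclideanSpace ℝ (Fin n)) (hu : ‖u‖ = 1) (α : ℝ) (hα : 0 < α)
    (hhs : ∀ x ∈ S, α ≤ ⟪x, u⟫) :
    closure (rho Φ '' (convexHull ℝ S)) =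
      ⋂₀ {C : Set (EuclideanSpace ℝ (Fin n)) |
        C ⊆ sphereSet Φ ∧ IsClosed C ∧ SConvex Φ C ∧ S ⊆ C} := by
  set T := rho Φ '' (convexHull ℝ S) with hT
  -- basic positivity facts
  have hΦpos : ∀ x : EuclideanSpace ℝ (Fin n), x ≠ 0 → 0 < Φ x := by
    intro x hx
    exact (hnn x).lt_of_ne (fun h => hx ((hzero x).1 h.symm))
  -- the halfspace is convex and closed
  have hlin : IsLinearMap ℝ (fun x : EuclideanSpace ℝ (Fin n) => ⟪x, u⟫) :=
    ⟨fun x y => inner_add_left x y u, fun c x => real_inner_smul_left x u c⟩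
  have hhalf_conv : Convex ℝ {x : EuclideanSpace ℝ (Fin n) | α ≤ ⟪x, u⟫} :=
    convex_halfSpace_ge hlin α
  have hhalf_closed : IsClosed {x : EuclideanSpace ℝ (Fin n) | α ≤ ⟪x, u⟫} :=
    isClosed_le continuous_const (continuous_id.inner continuous_const)
  -- convex hull facts
  have hch_half : convexHull ℝ S ⊆ {x | α ≤ ⟪x, u⟫} :=
    convexHull_min hhs hhalf_conv
  have hch_ne : ∀ a ∈ convexHull ℝ S, a ≠ 0 := by
    intro a ha h0
    have := hch_half ha
    rw [h0] at this
    simp only [mem_setOf_eq, inner_zero_left] at this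
    linarith
  have hch_pos : ∀ a ∈ convexHull ℝ S, 0 < Φ a := fun a ha => hΦpos a (hch_ne a ha)
  have hch_le1 : ∀ a ∈ convexHull ℝ S, Φ a ≤ 1 := by
    have hset : Convex ℝ {x : EuclideanSpace ℝ (Fin n) | Φ x ≤ 1} := by
      have := hconv.convex_le 1
      simpa using this
    intro a ha
    exact convexHull_min (fun x hx => le_of_eq (hsub hx)) hset ha
  -- rho fixes S and maps the hull into the sphere
  have hrho_fix : ∀ x ∈ S, rho Φ x = x := by
    intro x hx
    have : Φ x = 1 := hsub hx
    simp [rho, this]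
  have hrho_sphere : ∀ a : EuclideanSpace ℝ (Fin n), a ≠ 0 → Φ (rho Φ a) = 1 := by
    intro a ha
    have h := hΦpos a ha
    simp [rho, hhom (Φ a)⁻¹ (inv_nonneg.2 h.le) a, inv_mul_cancel₀ h.ne']
  have hT_sphere : T ⊆ sphereSet Φ := by
    rintro _ ⟨a, ha, rfl⟩
    exact hrho_sphere a (hch_ne a ha)
  have hST : S ⊆ T := by
    intro x hx
    exact ⟨x, subset_convexHull ℝ S hx, hrho_fix x hx⟩
  -- T lies in the halfspace
  have hT_half : T ⊆ {x | α ≤ ⟪x, u⟫} := by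
    rintro _ ⟨a, ha, rfl⟩
    have h1 : α ≤ ⟪a, u⟫ := hch_half ha
    have h2 : 0 < Φ a := hch_pos a ha
    have h3 : Φ a ≤ 1 := hch_le1 a ha
    have h4 : (1:ℝ) ≤ (Φ a)⁻¹ := by
      rw [le_inv_comm₀ one_pos h2]; simpa using h3
    show α ≤ ⟪(Φ a)⁻¹ • a, u⟫
    rw [real_inner_smul_left]
    nlinarith [inv_pos.2 h2, h4]
  have hclT_half : closure T ⊆ {x | α ≤ ⟪x, u⟫} := closure_minimal hT_half hhalf_closed
  -- T is s-convex
  have hTsc : SConvex Φ T := by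
    rintro _ ⟨a, ha, rfl⟩ _ ⟨b, hb, rfl⟩ l hl
    obtain ⟨m, hm, heq⟩ := rho_combo hhom (inv_pos.2 (hch_pos a ha)) (inv_pos.2 (hch_pos b hb)) hl
    have : rho Φ (l • rho Φ a + (1 - l) • rho Φ b) = rho Φ (m • a + (1 - m) • b) := heq
    rw [this]
    exact ⟨m • a + (1 - m) • b,
      (convex_convexHull ℝ S) ha hb hm.1 (by linarith [hm.2]) (by ring), rfl⟩
  -- closure T is s-convex
  have hclTsc : SConvex Φ (closure T) := by
    intro x hx y hy l hl
    set g : EuclideanSpace ℝ (Fin n) × EuclideanSpace ℝ (Fin n) → EuclideanSpace ℝ (Fin n) :=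
      fun p => rho Φ (l • p.1 + (1 - l) • p.2) with hg
    have hcont : ∀ p ∈ closure (T ×ˢ T), ContinuousAt g p := by
      intro p hp
      rw [closure_prod_eq] at hp
      have hz : l • p.1 + (1 - l) • p.2 ∈ {x : EuclideanSpace ℝ (Fin n) | α ≤ ⟪x, u⟫} :=
        hhalf_conv (hclT_half hp.1) (hclT_half hp.2) hl.1 (by linarith [hl.2]) (by ring)
      have hz0 : l • p.1 + (1 - l) • p.2 ≠ 0 := by
        intro h
        rw [h] at hz
        simp only [mem_setOf_eq, inner_zero_left] at hz
        linarith
      have hΦz : Φ (l • p.1 + (1 - l) • p.2) ≠ 0 := (hΦpos _ hz0).ne'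
      have hcaff : ContinuousAt (fun p : EuclideanSpace ℝ (Fin n) × EuclideanSpace ℝ (Fin n) =>
          l • p.1 + (1 - l) • p.2) p :=
        (continuousAt_fst.const_smul l).add (continuousAt_snd.const_smul (1 - l))
      have hrho : ContinuousAt (rho Φ) (l • p.1 + (1 - l) • p.2) := by
        have : ContinuousAt (fun z : EuclideanSpace ℝ (Fin n) => (Φ z)⁻¹ • z)
            (l • p.1 + (1 - l) • p.2) :=
          (hc.continuousAt.inv₀ hΦz).smul continuousAt_id
        exact this
      exact ContinuousAt.comp (g := rho Φ) hrho hcaff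
    have himg : g '' (T ×ˢ T) ⊆ T := by
      rintro _ ⟨⟨a, b⟩, ⟨haT, hbT⟩, rfl⟩
      exact hTsc a haT b hbT l hl
    have hmem : (x, y) ∈ closure (T ×ˢ T) := by
      rw [closure_prod_eq]; exact ⟨hx, hy⟩
    have himcl := (continuousOn_of_forall_continuousAt hcont).image_closure (s := T ×ˢ T)
    have hg_mem : g (x, y) ∈ closure (g '' (T ×ˢ T)) := himcl ⟨(x, y), hmem, rfl⟩
    exact closure_mono himg hg_mem
  -- closure T is in the family
  have hclT_sphere : closure T ⊆ sphereSet Φ :=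
    closure_minimal hT_sphere (isClosed_eq hc continuous_const)
  -- the inclusion T ⊆ C for any C in the family
  have hTC : ∀ C : Set (EuclideanSpace ℝ (Fin n)),
      C ⊆ sphereSet Φ → IsClosed C → SConvex Φ C → S ⊆ C → T ⊆ C := by
    intro C hC1 hC2 hC3 hC4
    set P := {a : EuclideanSpace ℝ (Fin n) | α ≤ ⟪a, u⟫ ∧ rho Φ a ∈ C} with hP
    have hPconv : Convex ℝ P := by
      intro a ha b hb l l' hl0 hl0' hll'
      have ha0 : a ≠ 0 := by
        intro h; rw [h] at ha
        simp only [hP, mem_setOf_eq, inner_zero_left] at ha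
        linarith [ha.1]
      have hb0 : b ≠ 0 := by
        intro h; rw [h] at hb
        simp only [hP, mem_setOf_eq, inner_zero_left] at hb
        linarith [hb.1]
      have hl1 : l ≤ 1 := by linarith
      constructor
      · show α ≤ ⟪l • a + l' • b, u⟫
        rw [inner_add_left, real_inner_smul_left, real_inner_smul_left]
        nlinarith [ha.1, hb.1]
      · have hpa : (Φ a) • rho Φ a = a := by
          simp [rho, smul_smul, mul_inv_cancel₀ (hΦpos a ha0).ne']
        have hpb : (Φ b) • rho Φ b = b := by
          simp [rho, smul_smul, mul_inv_cancel₀ (hΦpos b hb0).ne']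
        obtain ⟨m, hm, heq⟩ := rho_combo hhom (a := rho Φ a) (b := rho Φ b)
          (hΦpos a ha0) (hΦpos b hb0) ⟨hl0, hl1⟩
        rw [hpa, hpb] at heq
        have hl' : l' = 1 - l := by linarith
        rw [hl', heq]
        exact hC3 _ ha.2 _ hb.2 m hm
    have hSP : S ⊆ P := by
      intro x hx
      exact ⟨hhs x hx, by rw [hrho_fix x hx]; exact hC4 hx⟩
    rintro _ ⟨a, ha, rfl⟩
    exact (convexHull_min hSP hPconv ha).2
  -- conclude
  apply Set.Subset.antisymm
  · intro z hz
    rw [mem_sInter]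
    rintro C ⟨hC1, hC2, hC3, hC4⟩
    exact closure_minimal (hTC C hC1 hC2 hC3 hC4) hC2 hz
  · exact Set.sInter_subset_of_mem ⟨hclT_sphere, isClosed_closure, hclTsc,
      hST.trans subset_closure⟩
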